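/- Let $L$ be the Laplacian of a connected weighted graph $H$ on vertex set $V$ with $|V| \ge 2$, and let $X \subsetneq V$ be nonempty. Then the Schur complement $L[X,X] - L[X, V \setminus X]\, L[V\setminus X, V\setminus X]^{-1}\, L[V\setminus X, X]$ is itself the Laplacian matrix of a weighted graph on $X$ with nonnegative edge weights; i.e., it is symmetric, has zero row sums, and has nonpositive off-diagonal entries. -/
import Mathlib


open Matrix MeasureTheory
open scoped Classical

/-- The (weighted) Laplacian matrix of the weighted graph on `V` with weights `c`. -/
noncomputable def lapl {V : Type*} [Fintype V] [DecidableEq V] (c : V → V → ℝ) :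
    Matrix V V ℝ :=
  fun u v => if u = v then ∑ w, c u w else -c u v

/-- The graph described by `L` is connected: the kernel of `L` consists of constants. -/
def LapConnected {V : Type*} [Fintype V] (L : Matrix V V ℝ) : Prop :=
  ∀ x : V → ℝ, L *ᵥ x = 0 → ∃ k : ℝ, ∀ v, x v = k

/-- The Schur complement of `L` onto the rows and columns indexed by `S`,
eliminating the vertices outside of `S`. -/
noncomputable def schur {V : Type*} [Fintype V] [DecidableEq V]
    (L : Matrix V V ℝ) (S : Set V) : Matrix S S ℝ :=
  (Matrix.of fun i j : S => L i.1 j.1)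
    - (Matrix.of fun (i : S) (j : {v : V // v ∉ S}) => L i.1 j.1)
        * (Matrix.of fun i j : {v : V // v ∉ S} => L i.1 j.1)⁻¹
        * (Matrix.of fun (i : {v : V // v ∉ S}) (j : S) => L i.1 j.1)

/-- `B` is the Moore–Penrose pseudoinverse of `A`. -/
def IsMPInv {n : Type*} [Fintype n] (A B : Matrix n n ℝ) : Prop :=
  A * B * A = A ∧ B * A * B = B ∧ (A * B)ᵀ = A * B ∧ (B * A)ᵀ = B * A


section SchurAux

variable {V : Type*} [Fintype V] [DecidableEq V]


lemma lapl_mulVec_apply (c : V → V → ℝ) (hdiag : ∀ v, c v v = 0) (x : V → ℝ) (u : V) :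
    (lapl c *ᵥ x) u = ∑ w, c u w * (x u - x w) := by
  have h1 : (lapl c *ᵥ x) u
      = ∑ w, (if u = w then (∑ w', c u w') else -c u w) * x w := rfl
  have h2 : ∀ w, (if u = w then (∑ w', c u w') else -c u w) * x w
      = (if u = w then (∑ w', c u w') * x u else 0) - c u w * x w := by
    intro w
    by_cases h : u = w
    · subst h
      rw [if_pos rfl, if_pos rfl, hdiag u]
      ring
    · rw [if_neg h, if_neg h]
      ring
  rw [h1]
  simp only [h2]
  rw [Finset.sum_sub_distrib, Finset.sum_ite_eq Finset.univ u
    (fun _ => (∑ w', c u w') * x u), if_pos (Finset.mem_univ u)]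
  simp only [mul_sub]
  rw [Finset.sum_sub_distrib, ← Finset.sum_mul]

lemma lapl_symm (c : V → V → ℝ) (hsymm : ∀ u v, c u v = c v u) (u v : V) :
    lapl c u v = lapl c v u := by
  by_cases h : u = v
  · subst h; rfl
  · show (if u = v then _ else -c u v) = (if v = u then _ else -c v u)
    rw [if_neg h, if_neg (Ne.symm h), hsymm u v]

lemma lapl_rowsum (c : V → V → ℝ) (hdiag : ∀ v, c v v = 0) (u : V) :
    ∑ w, lapl c u w = 0 := by
  have := lapl_mulVec_apply c hdiag (fun _ => 1) u
  simpa [mulVec, dotProduct] using this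

lemma no_cut (c : V → V → ℝ) (hsymm : ∀ u v, c u v = c v u) (hdiag : ∀ v, c v v = 0)
    (hconn : LapConnected (lapl c))
    (S : Set V) (hcut : ∀ u ∈ S, ∀ v, v ∉ S → c u v = 0) :
    S = ∅ ∨ S = Set.univ := by
  classical
  set x : V → ℝ := fun v => if v ∈ S then 1 else 0 with hx
  have hker : lapl c *ᵥ x = 0 := by
    funext u
    rw [lapl_mulVec_apply c hdiag]
    show ∑ w, c u w * (x u - x w) = 0
    apply Finset.sum_eq_zero
    intro w _
    by_cases hu : u ∈ S <;> by_cases hw : w ∈ S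
    · simp [hx, hu, hw]
    · simp [hcut u hu w hw]
    · have hc : c u w = 0 := by rw [hsymm]; exact hcut w hw u hu
      simp [hc]
    · simp [hx, hu, hw]
  obtain ⟨k, hk⟩ := hconn x hker
  by_cases hS : S = ∅
  · exact Or.inl hS
  · right
    obtain ⟨u, hu⟩ := Set.nonempty_iff_ne_empty.mpr hS
    have hk1 : k = 1 := by
      have := hk u
      simp [hx, hu] at this
      exact this.symm
    ext v
    simp only [Set.mem_univ, iff_true]
    by_contra hv
    have := hk v
    simp [hx, hv, hk1] at this

lemma key_nonneg (c : V → V → ℝ) (hsymm : ∀ u v, c u v = c v u)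
    (hnonneg : ∀ u v, 0 ≤ c u v) (hdiag : ∀ v, c v v = 0)
    (hconn : LapConnected (lapl c))
    (X : Set V) (hneX : X.Nonempty)
    (x : {v : V // v ∉ X} → ℝ)
    (hb : ∀ u, 0 ≤ ((Matrix.of fun i j : {v : V // v ∉ X} => lapl c i.1 j.1) *ᵥ x) u) :
    ∀ i, 0 ≤ x i := by
  classical
  set z : V → ℝ := fun v => if h : v ∉ X then x ⟨v, h⟩ else 0 with hzdef
  have hzX : ∀ v ∈ X, z v = 0 := by
    intro v hv; simp only [hzdef]; rw [dif_neg (not_not.mpr hv)]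
  have hzY : ∀ v : {v : V // v ∉ X}, z v.1 = x v := by
    intro v; simp only [hzdef]; rw [dif_pos v.2]
  have hLz : ∀ u : {v : V // v ∉ X},
      (lapl c *ᵥ z) u.1
        = ((Matrix.of fun i j : {v : V // v ∉ X} => lapl c i.1 j.1) *ᵥ x) u := by
    intro u
    show ∑ w, lapl c u.1 w * z w = _
    rw [← Fintype.sum_subtype_add_sum_subtype (fun v => v ∉ X)
      (fun w => lapl c u.1 w * z w)]
    have h2 : ∑ w : {v : V // ¬ v ∉ X}, lapl c u.1 w.1 * z w.1 = 0 := by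
      apply Finset.sum_eq_zero
      intro w _
      rw [hzX w.1 (not_not.mp w.2), mul_zero]
    rw [h2, add_zero]
    show _ = ∑ w : {v : V // v ∉ X}, lapl c u.1 w.1 * x w
    exact Finset.sum_congr rfl fun w _ => by rw [hzY w]
  by_contra hneg
  push_neg at hneg
  obtain ⟨i0, hi0⟩ := hneg
  obtain ⟨u0, -, hmin⟩ := Finset.exists_min_image Finset.univ z ⟨i0.1, Finset.mem_univ _⟩
  set m := z u0 with hm
  have hmneg : m < 0 := lt_of_le_of_lt (hmin i0.1 (Finset.mem_univ _)) (by rw [hzY]; exact hi0)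
  set S : Set V := {v | z v = m} with hS
  have hSX : ∀ u ∈ S, u ∉ X := by
    intro u hu huX
    have := hzX u huX
    rw [Set.mem_setOf_eq] at hu
    rw [hu] at this
    linarith
  have hScut : ∀ u ∈ S, ∀ w, w ∉ S → c u w = 0 := by
    intro u hu w hw
    have huX : u ∉ X := hSX u hu
    have hu' : z u = m := hu
    have hterm : ∀ w', c u w' * (z u - z w') ≤ 0 := by
      intro w'
      apply mul_nonpos_of_nonneg_of_nonpos (hnonneg u w')
      rw [hu']
      linarith [hmin w' (Finset.mem_univ w')]
    have hge : 0 ≤ (lapl c *ᵥ z) u := by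
      have := hb ⟨u, huX⟩
      rw [← hLz ⟨u, huX⟩] at this
      exact this
    rw [lapl_mulVec_apply c hdiag] at hge
    have hsum0 : ∑ w', c u w' * (z u - z w') = 0 :=
      le_antisymm (Finset.sum_nonpos fun w' _ => hterm w') hge
    have := (Finset.sum_eq_zero_iff_of_nonpos (fun w' _ => hterm w')).mp hsum0 w
      (Finset.mem_univ w)
    rcases mul_eq_zero.mp this with h | h
    · exact h
    · exfalso
      apply hw
      have hzw : z w = z u := by linarith [sub_eq_zero.mp h]
      show z w = m
      rw [hzw, hu']
  rcases no_cut c hsymm hdiag hconn S hScut with h | h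
  · have : u0 ∈ S := rfl
    rw [h] at this
    exact this
  · obtain ⟨v0, hv0⟩ := hneX
    have : v0 ∈ S := h ▸ Set.mem_univ v0
    exact hSX v0 this hv0

lemma C_det_isUnit (c : V → V → ℝ) (hsymm : ∀ u v, c u v = c v u)
    (hnonneg : ∀ u v, 0 ≤ c u v) (hdiag : ∀ v, c v v = 0)
    (hconn : LapConnected (lapl c))
    (X : Set V) (hneX : X.Nonempty) :
    IsUnit (Matrix.of fun i j : {v : V // v ∉ X} => lapl c i.1 j.1).det := by
  rw [isUnit_iff_ne_zero]
  intro hdet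
  obtain ⟨v, hv0, hv⟩ := Matrix.exists_mulVec_eq_zero_iff.mpr hdet
  have h1 := key_nonneg c hsymm hnonneg hdiag hconn X hneX v
    (by rw [hv]; intro u; exact le_refl 0)
  have h2 := key_nonneg c hsymm hnonneg hdiag hconn X hneX (-v)
    (by rw [Matrix.mulVec_neg, hv, neg_zero]; intro u; exact le_refl 0)
  apply hv0
  funext i
  have := h2 i
  simp only [Pi.neg_apply, Pi.zero_apply] at this ⊢
  linarith [h1 i]

lemma Cinv_nonneg (c : V → V → ℝ) (hsymm : ∀ u v, c u v = c v u)
    (hnonneg : ∀ u v, 0 ≤ c u v) (hdiag : ∀ v, c v v = 0)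
    (hconn : LapConnected (lapl c))
    (X : Set V) (hneX : X.Nonempty) (k l : {v : V // v ∉ X}) :
    0 ≤ (Matrix.of fun i j : {v : V // v ∉ X} => lapl c i.1 j.1)⁻¹ k l := by
  set C := Matrix.of fun i j : {v : V // v ∉ X} => lapl c i.1 j.1 with hC
  have hdet := C_det_isUnit c hsymm hnonneg hdiag hconn X hneX
  have hx : C *ᵥ (C⁻¹ *ᵥ Pi.single l 1) = Pi.single l 1 := by
    rw [Matrix.mulVec_mulVec, Matrix.mul_nonsing_inv _ hdet, Matrix.one_mulVec]
  have := key_nonneg c hsymm hnonneg hdiag hconn X hneX (C⁻¹ *ᵥ Pi.single l 1)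
    (by rw [hx]; intro u; by_cases h : u = l
        · subst h; simp
        · simp [Pi.single_apply, h])
  have hk := this k
  rw [Matrix.mulVec_single] at hk
  simpa using hk

end SchurAux

/-- The Schur complement of a connected graph Laplacian is itself a graph Laplacian:
it is symmetric, has zero row sums, and has nonpositive off-diagonal entries. -/
theorem schur_is_laplacian {V : Type*} [Fintype V] [DecidableEq V]
    (c : V → V → ℝ) (hsymm : ∀ u v, c u v = c v u) (hnonneg : ∀ u v, 0 ≤ c u v)
    (hdiag : ∀ v, c v v = 0) (hconn : LapConnected (lapl c))
    (hcard : 2 ≤ Fintype.card V)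
    (X : Set V) (hne : X.Nonempty) (hproper : X ≠ Set.univ) :
    (schur (lapl c) X)ᵀ = schur (lapl c) X ∧
    (∀ i : X, ∑ j : X, schur (lapl c) X i j = 0) ∧
    (∀ i j : X, i ≠ j → schur (lapl c) X i j ≤ 0) := by
  classical
  set L := lapl c with hL
  set A : Matrix X X ℝ := Matrix.of fun i j : X => L i.1 j.1 with hA
  set B : Matrix X {v : V // v ∉ X} ℝ :=
    Matrix.of (fun (i : X) (j : {v : V // v ∉ X}) => L i.1 j.1) with hB
  set C : Matrix {v : V // v ∉ X} {v : V // v ∉ X} ℝ :=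
    Matrix.of fun i j : {v : V // v ∉ X} => L i.1 j.1 with hC
  set B' : Matrix {v : V // v ∉ X} X ℝ :=
    Matrix.of (fun (i : {v : V // v ∉ X}) (j : X) => L i.1 j.1) with hB'
  have hschur : schur L X = A - B * C⁻¹ * B' := rfl
  have hdet : IsUnit C.det := C_det_isUnit c hsymm hnonneg hdiag hconn X hne
  -- symmetry facts
  have hAt : Aᵀ = A := by
    ext i j; exact lapl_symm c hsymm j.1 i.1
  have hCt : Cᵀ = C := by
    ext i j; exact lapl_symm c hsymm j.1 i.1
  have hBt : Bᵀ = B' := by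
    ext i j; exact lapl_symm c hsymm j.1 i.1
  have hB't : B'ᵀ = B := by
    ext i j; exact lapl_symm c hsymm j.1 i.1
  have hCit : (C⁻¹)ᵀ = C⁻¹ := by
    rw [Matrix.transpose_nonsing_inv, hCt]
  refine ⟨?_, ?_, ?_⟩
  · rw [hschur, Matrix.transpose_sub, hAt, Matrix.transpose_mul, Matrix.transpose_mul,
      hB't, hBt, hCit, Matrix.mul_assoc]
  · -- zero row sums
    intro i
    have hsplit : ∀ f : V → ℝ,
        (∑ w : X, f w.1) + ∑ w : {v : V // v ∉ X}, f w.1 = ∑ w, f w := by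
      intro f
      exact Fintype.sum_subtype_add_sum_subtype (fun v => v ∈ X) f
    set oneX : X → ℝ := fun _ => 1 with honeX
    set oneY : {v : V // v ∉ X} → ℝ := fun _ => 1 with honeY
    have hrow : ∀ u : V, (∑ w : X, L u w.1) + ∑ w : {v : V // v ∉ X}, L u w.1 = 0 := by
      intro u
      rw [hsplit (fun w => L u w)]
      exact lapl_rowsum c hdiag u
    have f1 : B' *ᵥ oneX = C *ᵥ (-oneY) := by
      funext u
      show ∑ w : X, L u.1 w.1 * 1 = ∑ w : {v : V // v ∉ X}, L u.1 w.1 * (-1)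
      simp only [mul_one, mul_neg_one, Finset.sum_neg_distrib]
      linarith [hrow u.1]
    have f2 : C⁻¹ *ᵥ (B' *ᵥ oneX) = -oneY := by
      rw [f1, Matrix.mulVec_mulVec, Matrix.nonsing_inv_mul _ hdet, Matrix.one_mulVec]
    have hrowsum : ∑ j : X, schur L X i j = (schur L X *ᵥ oneX) i := by
      show _ = ∑ j : X, schur L X i j * 1
      simp only [mul_one]
    rw [hrowsum, hschur, Matrix.sub_mulVec, Matrix.mul_assoc, ← Matrix.mulVec_mulVec,
      ← Matrix.mulVec_mulVec, f2]
    have : B *ᵥ (-oneY) = -(B *ᵥ oneY) := by rw [Matrix.mulVec_neg]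
    rw [this]
    show (A *ᵥ oneX) i - (-(B *ᵥ oneY)) i = 0
    have hAi : (A *ᵥ oneX) i = ∑ w : X, L i.1 w.1 := by
      show ∑ w : X, L i.1 w.1 * 1 = _
      simp only [mul_one]
    have hBi : (B *ᵥ oneY) i = ∑ w : {v : V // v ∉ X}, L i.1 w.1 := by
      show ∑ w : {v : V // v ∉ X}, L i.1 w.1 * 1 = _
      simp only [mul_one]
    rw [hAi, Pi.neg_apply, hBi, sub_neg_eq_add, hrow i.1]
  · -- off-diagonal
    intro i j hij
    have hij' : i.1 ≠ j.1 := fun h => hij (Subtype.ext h)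
    have hAij : A i j = -c i.1 j.1 := by
      show L i.1 j.1 = _
      rw [hL]; show (if i.1 = j.1 then _ else -c i.1 j.1) = _
      rw [if_neg hij']
    have hBneg : ∀ k : {v : V // v ∉ X}, B i k = -c i.1 k.1 := by
      intro k
      have : i.1 ≠ k.1 := fun h => k.2 (h ▸ i.2)
      show L i.1 k.1 = _
      rw [hL]; show (if i.1 = k.1 then _ else -c i.1 k.1) = _
      rw [if_neg this]
    have hB'neg : ∀ l : {v : V // v ∉ X}, B' l j = -c l.1 j.1 := by
      intro l
      have : l.1 ≠ j.1 := fun h => l.2 (h ▸ j.2)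
      show L l.1 j.1 = _
      rw [hL]; show (if l.1 = j.1 then _ else -c l.1 j.1) = _
      rw [if_neg this]
    have hprod : 0 ≤ (B * C⁻¹ * B') i j := by
      rw [Matrix.mul_apply]
      apply Finset.sum_nonneg
      intro l _
      rw [Matrix.mul_apply]
      have h1 : ∑ k, B i k * C⁻¹ k l = -(∑ k, c i.1 k.1 * C⁻¹ k l) := by
        rw [← Finset.sum_neg_distrib]
        apply Finset.sum_congr rfl
        intro k _
        rw [hBneg k]; ring
      rw [h1, hB'neg l, neg_mul_neg]
      apply mul_nonneg
      · apply Finset.sum_nonneg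
        intro k _
        exact mul_nonneg (hnonneg _ _) (Cinv_nonneg c hsymm hnonneg hdiag hconn X hne k l)
      · exact hnonneg _ _
    have : schur L X i j = A i j - (B * C⁻¹ * B') i j := rfl
    rw [this, hAij]
    have := hnonneg i.1 j.1
    linarith
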